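/- Fix an alphabet size k ≥ 2. Let n be a positive integer and a, b integers with 0 ≤ a ≤ n and 0 ≤ b ≤ n. If there exists a marking of the k-ary n-cube in which every vertex has mark-count a or b, then there exists a marking of the k-ary (n+k)-cube in which every vertex has mark-count a+1 or b+1. -/

import Mathlib

/-- A marking of the `k`-ary `n`-cube: for each vertex `v : Fin n → Fin k` and
each direction `i`, the "edge through `v` in direction `i`" is the set of `k`
vertices agreeing with `v` in all coordinates except possibly `i`.  A marking
assigns to each such edge one of its `k` vertices: `mark v i` is the vertex
assigned to the edge through `v` in direction `i`; it must lie on that edge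
(`mem_edge`) and depend only on the edge itself (`compatible`). -/
structure Marking (k n : ℕ) where
  mark : (Fin n → Fin k) → Fin n → (Fin n → Fin k)
  mem_edge : ∀ v i j, j ≠ i → mark v i j = v j
  compatible : ∀ v w i, (∀ j, j ≠ i → v j = w j) → mark v i = mark w i

/-- The mark-count of a vertex `v`: the number of directions `i` such that
the edge through `v` in direction `i` has `v` as its assigned vertex. -/
def Marking.count {k n : ℕ} (m : Marking k n) (v : Fin n → Fin k) : ℕ :=
  (Finset.univ.filter fun i : Fin n => m.mark v i = v).card

open Finset

section KaryAux
variable {k : ℕ} [NeZero k]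

def finToZ (x : Fin k) : ZMod k := (x.val : ZMod k)
def zToFin (z : ZMod k) : Fin k := ⟨z.val, ZMod.val_lt z⟩

lemma ofZ_toZ (x : Fin k) : zToFin (finToZ x) = x := by
  apply Fin.ext
  simp [zToFin, finToZ, ZMod.val_cast_of_lt x.isLt]

lemma toZ_ofZ (z : ZMod k) : finToZ (zToFin z) = z := ZMod.natCast_rightInverse z

def markingOfFun {n : ℕ} (c : (Fin n → Fin k) → Fin n → Fin k)
    (hc : ∀ v w i, (∀ j, j ≠ i → v j = w j) → c v i = c w i) : Marking k n where
  mark v i := Function.update v i (c v i)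
  mem_edge v i j h := Function.update_of_ne h _ _
  compatible v w i h := by
    funext j
    rcases eq_or_ne j i with rfl | hj
    · simp [hc v w j h]
    · simp [Function.update_of_ne hj, h j hj]

lemma count_markingOfFun {n : ℕ} (c : (Fin n → Fin k) → Fin n → Fin k)
    (hc : ∀ v w i, (∀ j, j ≠ i → v j = w j) → c v i = c w i) (v : Fin n → Fin k) :
    (markingOfFun c hc).count v = (univ.filter fun i => c v i = v i).card := by
  unfold Marking.count
  congr 1
  apply filter_congr
  intro i _
  constructor
  · intro h
    have := congrFun h i
    simpa [markingOfFun] using this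
  · intro h
    funext j
    rcases eq_or_ne j i with rfl | hj
    · simpa [markingOfFun] using h
    · simp [markingOfFun, Function.update_of_ne hj]

end KaryAux

theorem kary_marking_add (k : ℕ) (hk : 2 ≤ k) (n : ℕ) (hn : 0 < n) (a b : ℤ)
    (ha0 : 0 ≤ a) (han : a ≤ n) (hb0 : 0 ≤ b) (hbn : b ≤ n)
    (h : ∃ m : Marking k n, ∀ v, (m.count v : ℤ) = a ∨ (m.count v : ℤ) = b) :
    ∃ m : Marking k (n + k), ∀ v,
      (m.count v : ℤ) = a + 1 ∨ (m.count v : ℤ) = b + 1 := by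
  obtain ⟨m, hm⟩ := h
  haveI : NeZero k := ⟨by omega⟩
  set e : Fin n ⊕ Fin k ≃ Fin (n + k) := finSumFinEquiv with he
  let c : (Fin (n + k) → Fin k) → Fin (n + k) → Fin k := fun v i =>
    Sum.elim (fun j => m.mark (fun t => v (e (Sum.inl t))) j j)
      (fun j => zToFin (finToZ j - ∑ t ∈ univ.erase j, finToZ (v (e (Sum.inr t)))))
      (e.symm i)
  have hc : ∀ v w i, (∀ j, j ≠ i → v j = w j) → c v i = c w i := by
    intro v w i hvw
    show Sum.elim _ _ (e.symm i) = Sum.elim _ _ (e.symm i)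
    rcases hs : e.symm i with j | j
    · have hi : e (Sum.inl j) = i := by rw [← hs]; simp
      simp only [Sum.elim_inl]
      have hcompat := m.compatible (fun t => v (e (Sum.inl t))) (fun t => w (e (Sum.inl t))) j
        (fun t ht => hvw _ (fun hh => ht (Sum.inl.inj (e.injective (hh.trans hi.symm)))))
      rw [hcompat]
    · simp only [Sum.elim_inr]
      have hi : e (Sum.inr j) = i := by rw [← hs]; simp
      congr 1
      congr 1
      apply Finset.sum_congr rfl
      intro t ht
      have ht' : t ≠ j := (Finset.mem_erase.mp ht).1
      have : e (Sum.inr t) ≠ i := by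
        rw [← hi]; exact fun hh => ht' (Sum.inr.inj (e.injective hh))
      rw [hvw _ this]
  refine ⟨markingOfFun c hc, ?_⟩
  intro v
  set uv : Fin n → Fin k := fun t => v (e (Sum.inl t)) with huv
  have key : (markingOfFun c hc).count v = m.count uv + 1 := by
    rw [count_markingOfFun, Finset.card_filter]
    rw [← Fintype.sum_bijective e e.bijective _ _ (fun s => rfl)]
    rw [Fintype.sum_sum_type]
    have h1 : ∀ j : Fin n, c v (e (Sum.inl j)) = m.mark uv j j := by
      intro j; simp only [c, Equiv.symm_apply_apply, Sum.elim_inl]; rfl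
    have h2 : ∀ j : Fin k,
        c v (e (Sum.inr j)) = zToFin (finToZ j - ∑ t ∈ univ.erase j, finToZ (v (e (Sum.inr t)))) := by
      intro j; simp only [c, Equiv.symm_apply_apply, Sum.elim_inr]
    have e1 : (∑ j : Fin n, if c v (e (Sum.inl j)) = v (e (Sum.inl j)) then 1 else 0)
        = m.count uv := by
      rw [Marking.count, Finset.card_filter]
      apply Finset.sum_congr rfl
      intro j _
      congr 1
      rw [h1]
      show (m.mark uv j j = uv j) = (m.mark uv j = uv)
      apply propext
      constructor
      · intro hh
        funext t
        rcases eq_or_ne t j with rfl | ht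
        · exact hh
        · exact m.mem_edge uv j t ht
      · intro hh; rw [hh]
    have e2 : (∑ j : Fin k, if c v (e (Sum.inr j)) = v (e (Sum.inr j)) then 1 else 0) = 1 := by
      set S : ZMod k := ∑ t : Fin k, finToZ (v (e (Sum.inr t))) with hS
      have bij : ∀ (x : ZMod k) (y : Fin k), zToFin x = y ↔ x = finToZ y := by
        intro x y
        constructor
        · intro hh; rw [← hh, toZ_ofZ]
        · intro hh; rw [hh, ofZ_toZ]
      have cond : ∀ j : Fin k,
          (c v (e (Sum.inr j)) = v (e (Sum.inr j))) ↔ (j = zToFin S) := by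
        intro j
        rw [h2, bij]
        have hsplit : S = finToZ (v (e (Sum.inr j)))
            + ∑ t ∈ univ.erase j, finToZ (v (e (Sum.inr t))) := by
          rw [hS, ← Finset.add_sum_erase _ _ (Finset.mem_univ j)]
        constructor
        · intro hh
          have hsum : finToZ j = S := by rw [hsplit]; linear_combination hh
          rw [← hsum, ofZ_toZ]
        · intro hh
          have hj : finToZ j = S := by rw [hh, toZ_ofZ]
          rw [hj, hsplit]; ring
      calc (∑ j : Fin k, if c v (e (Sum.inr j)) = v (e (Sum.inr j)) then 1 else 0)
          = ∑ j : Fin k, if j = zToFin S then 1 else 0 := by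
            apply Finset.sum_congr rfl; intro j _; simp [cond j]
        _ = 1 := by simp
    rw [e1, e2]
  rcases hm uv with hh | hh
  · left; rw [key]; push_cast; omega
  · right; rw [key]; push_cast; omega
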